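/- T_{k+1} is a contiguous subsection of L_{k+1}: for every k, if i₁, i₂ ∈ T_{k+1} and i ∈ L_{k+1} with i₁ < i < i₂, then i ∈ T_{k+1}. -/

import Mathlib

/-- `c` is an increasing subsequence of `(S, f)`: a list of indices, all in `S`,
strictly increasing in index and strictly increasing in value. -/
def IsIncrSubseq (S : Finset ℕ) (f : ℕ → ℝ) (c : List ℕ) : Prop :=
  (∀ a ∈ c, a ∈ S) ∧ c.Chain' (· < ·) ∧ c.Chain' (fun a b => f a < f b)

/-- `lvl S f i` is the maximum length of an increasing subsequence of `(S, f)` ending at `i`. -/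
noncomputable def lvl (S : Finset ℕ) (f : ℕ → ℝ) (i : ℕ) : ℕ :=
  sSup {m | ∃ c : List ℕ, IsIncrSubseq S f c ∧ c.getLast? = some i ∧ c.length = m}

/-- The level set `L_k = {i ∈ S : lvl S f i = k}`. -/
def levelSet (S : Finset ℕ) (f : ℕ → ℝ) (k : ℕ) : Set ℕ :=
  {i | i ∈ S ∧ lvl S f i = k}

/-- The promoted set `T_k`: indices of `S' = S ∪ {x}` whose post-insertion level is `k + 1`
and which are either the inserted index `x` or had pre-insertion level `k`. -/
def promoted (S : Finset ℕ) (f : ℕ → ℝ) (x : ℕ) (k : ℕ) : Set ℕ :=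
  {i | i ∈ insert x S ∧ lvl (insert x S) f i = k + 1 ∧ (i = x ∨ lvl S f i = k)}

namespace StmtAux

variable {S : Finset ℕ} {f : ℕ → ℝ}

instance : IsTrans ℕ (fun a b => f a < f b) := ⟨fun _ _ _ h1 h2 => h1.trans h2⟩

lemma pairwise_of_incr {c : List ℕ} (h : IsIncrSubseq S f c) : c.Pairwise (· < ·) :=
  List.isChain_iff_pairwise.mp h.2.1

lemma incr_sublist {c d : List ℕ} (h : IsIncrSubseq S f c) (hd : d.Sublist c) :
    IsIncrSubseq S f d :=
  ⟨fun a ha => h.1 a (hd.subset ha),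
   List.isChain_iff_pairwise.mpr ((List.isChain_iff_pairwise.mp h.2.1).sublist hd),
   List.isChain_iff_pairwise.mpr ((List.isChain_iff_pairwise.mp h.2.2).sublist hd)⟩

lemma length_le_card {c : List ℕ} (h : IsIncrSubseq S f c) : c.length ≤ S.card := by
  have hnd : c.Nodup := (pairwise_of_incr h).nodup
  calc c.length = c.toFinset.card := (List.toFinset_card_of_nodup hnd).symm
    _ ≤ S.card := Finset.card_le_card (fun a ha => h.1 a (List.mem_toFinset.mp ha))

lemma bddAbove_chainSet (i : ℕ) :
    BddAbove {m | ∃ c : List ℕ, IsIncrSubseq S f c ∧ c.getLast? = some i ∧ c.length = m} :=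
  ⟨S.card, fun _ ⟨_, hc, _, hl⟩ => hl ▸ length_le_card hc⟩

lemma le_lvl {i m : ℕ} {c : List ℕ} (hc : IsIncrSubseq S f c) (hl : c.getLast? = some i)
    (hm : c.length = m) : m ≤ lvl S f i :=
  le_csSup (bddAbove_chainSet i) ⟨c, hc, hl, hm⟩

lemma singleton_incr {i : ℕ} (hi : i ∈ S) : IsIncrSubseq S f [i] :=
  ⟨by simpa using hi, List.isChain_singleton i, List.isChain_singleton i⟩

lemma one_le_lvl {i : ℕ} (hi : i ∈ S) : 1 ≤ lvl S f i :=
  le_lvl (singleton_incr hi) (by simp) (by simp)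

lemma exists_max_chain {i : ℕ} (hi : i ∈ S) :
    ∃ c : List ℕ, IsIncrSubseq S f c ∧ c.getLast? = some i ∧ c.length = lvl S f i :=
  Nat.sSup_mem (⟨1, ⟨[i], singleton_incr hi, by simp, by simp⟩⟩ :
    Set.Nonempty {m | ∃ c : List ℕ, IsIncrSubseq S f c ∧ c.getLast? = some i ∧ c.length = m})
    (bddAbove_chainSet i)

lemma lvl_lt {a b : ℕ} (ha : a ∈ S) (hb : b ∈ S) (hab : a < b) (hf : f a < f b) :
    lvl S f a < lvl S f b := by
  obtain ⟨c, hc, hlast, hlen⟩ := exists_max_chain (f := f) ha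
  have hc' : IsIncrSubseq S f (c ++ [b]) := by
    refine ⟨fun y hy => ?_, ?_, ?_⟩
    · rcases List.mem_append.mp hy with h | h
      · exact hc.1 y h
      · simpa using (List.mem_singleton.mp h) ▸ hb
    · exact List.isChain_append.mpr ⟨hc.2.1, by simp, by simp [hlast, hab]⟩
    · exact List.isChain_append.mpr ⟨hc.2.2, by simp, by simp [hlast, hf]⟩
  have := le_lvl hc' List.getLast?_concat rfl
  simp [hlen] at this
  omega

lemma lvl_mono {S' : Finset ℕ} (hSS : S ⊆ S') {i : ℕ} (hi : i ∈ S) :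
    lvl S f i ≤ lvl S' f i := by
  obtain ⟨c, hc, hlast, hlen⟩ := exists_max_chain (f := f) hi
  exact hlen ▸ le_lvl ⟨fun a ha => hSS (hc.1 a ha), hc.2.1, hc.2.2⟩ hlast rfl

lemma getLast?_append_right {l₁ l₂ : List ℕ} (h : l₂ ≠ []) :
    (l₁ ++ l₂).getLast? = l₂.getLast? := by
  rw [List.getLast?_append]
  rcases h' : l₂.getLast? with _ | a
  · exact absurd (List.getLast?_eq_none_iff.mp h') h
  · simp

lemma getLast?_cons_of_ne_nil {x : ℕ} {l : List ℕ} (h : l ≠ []) :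
    (x :: l).getLast? = l.getLast? := by
  rcases l with _ | ⟨b, t⟩
  · exact absurd rfl h
  · simp [List.getLast?_cons_cons]

/-- Predecessor at exact level. -/
lemma exists_pred {i : ℕ} (hi : i ∈ S) (h2 : 2 ≤ lvl S f i) :
    ∃ a, a ∈ S ∧ a < i ∧ f a < f i ∧ lvl S f a = lvl S f i - 1 := by
  obtain ⟨c, hc, hlast, hlen⟩ := exists_max_chain (f := f) hi
  obtain ⟨d, rfl⟩ := List.getLast?_eq_some_iff.mp hlast
  have hd : d ≠ [] := by
    intro h; rw [h] at hlen; simp at hlen; omega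
  set a := d.getLast hd with ha_def
  have ha : d.getLast? = some a := List.getLast?_eq_getLast hd
  have hdc : IsIncrSubseq S f d := incr_sublist hc (List.sublist_append_left d [i])
  have haS : a ∈ S := hdc.1 a (List.mem_of_mem_getLast? ha)
  have hai : a < i := (List.isChain_append.mp hc.2.1).2.2 a ha i (by simp)
  have hfi : f a < f i := (List.isChain_append.mp hc.2.2).2.2 a ha i (by simp)
  have h1 : d.length ≤ lvl S f a := le_lvl hdc ha rfl
  have h2' : lvl S f a < lvl S f i := lvl_lt haS hi hai hfi
  have h3 : d.length + 1 = lvl S f i := by simpa using hlen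
  exact ⟨a, haS, hai, hfi, by omega⟩

variable {x : ℕ}

lemma incr_of_not_mem_x (hx : x ∉ S) {c : List ℕ} (hc : IsIncrSubseq (insert x S) f c)
    (hxc : x ∉ c) : IsIncrSubseq S f c := by
  refine ⟨fun a ha => ?_, hc.2.1, hc.2.2⟩
  rcases Finset.mem_insert.mp (hc.1 a ha) with rfl | h
  · exact absurd ha hxc
  · exact h

/-- Insertion increases level by at most one. -/
lemma lvl_insert_le (hx : x ∉ S) {i : ℕ} (hi : i ∈ S) :
    lvl (insert x S) f i ≤ lvl S f i + 1 := by
  obtain ⟨c, hc, hlast, hlen⟩ :=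
    exists_max_chain (S := insert x S) (f := f) (Finset.mem_insert_of_mem hi)
  by_cases hxc : x ∈ c
  · obtain ⟨c₁, c₂, rfl⟩ := List.append_of_mem hxc
    have hnd : (c₁ ++ x :: c₂).Nodup := (pairwise_of_incr hc).nodup
    have hsub : (c₁ ++ c₂).Sublist (c₁ ++ x :: c₂) :=
      (List.sublist_cons_self x c₂).append_left c₁
    have hd : IsIncrSubseq (insert x S) f (c₁ ++ c₂) := incr_sublist hc hsub
    have hxd : x ∉ c₁ ++ c₂ := by
      intro h'
      rcases List.mem_append.mp h' with h' | h'
      · exact (List.disjoint_of_nodup_append hnd) h' (by simp)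
      · exact (List.nodup_cons.mp (List.nodup_append.mp hnd).2.1).1 h'
    have hdS : IsIncrSubseq S f (c₁ ++ c₂) := incr_of_not_mem_x hx hd hxd
    have hc2 : c₂ ≠ [] := by
      rintro rfl
      rw [List.getLast?_concat] at hlast
      exact hx ((by simpa using hlast : x = i) ▸ hi)
    have hlast' : (c₁ ++ c₂).getLast? = some i := by
      rw [getLast?_append_right hc2]
      rw [getLast?_append_right (by simp : (x :: c₂ : List ℕ) ≠ []),
        getLast?_cons_of_ne_nil hc2] at hlast
      exact hlast
    have := le_lvl hdS hlast' rfl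
    have hl : (c₁ ++ c₂).length + 1 = (c₁ ++ x :: c₂).length := by simp; omega
    omega
  · have := le_lvl (incr_of_not_mem_x hx hc hxc) hlast rfl
    omega

/-- If `j` is promoted then `x << j`. -/
lemma promoted_lt (hx : x ∉ S) {j : ℕ} (hj : j ∈ S)
    (h : lvl S f j < lvl (insert x S) f j) : x < j ∧ f x < f j := by
  obtain ⟨c, hc, hlast, hlen⟩ :=
    exists_max_chain (S := insert x S) (f := f) (Finset.mem_insert_of_mem hj)
  have hxc : x ∈ c := by
    by_contra hxc
    have := le_lvl (incr_of_not_mem_x hx hc hxc) hlast rfl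
    omega
  have hxj : x ≠ j := fun h' => hx (h' ▸ hj)
  obtain ⟨c₁, c₂, rfl⟩ := List.append_of_mem hxc
  have hlast2 : (x :: c₂).getLast? = some j := by
    rwa [getLast?_append_right (by simp : (x :: c₂ : List ℕ) ≠ [])] at hlast
  have hc2 : c₂ ≠ [] := by
    rintro rfl
    exact hxj (by simpa using hlast2)
  have hjc2 : j ∈ c₂ :=
    List.mem_of_mem_getLast? ((getLast?_cons_of_ne_nil hc2) ▸ hlast2)
  have hp : (c₁ ++ x :: c₂).Pairwise (· < ·) := pairwise_of_incr hc
  have hp2 : (c₁ ++ x :: c₂).Pairwise (fun a b => f a < f b) :=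
    List.isChain_iff_pairwise.mp hc.2.2
  exact ⟨(List.pairwise_cons.mp (List.pairwise_append.mp hp).2.1).1 j hjc2,
    (List.pairwise_cons.mp (List.pairwise_append.mp hp2).2.1).1 j hjc2⟩

/-- Witness of promotion: the predecessor on a maximal chain of a promoted element is
itself promoted (or is `x`). -/
lemma promoted_witness (hx : x ∉ S) {j m : ℕ} (hj : j ∈ S) (hl : lvl S f j = m)
    (hl' : lvl (insert x S) f j = m + 1) (hm : 1 ≤ m) :
    ∃ a, a ∈ insert x S ∧ a < j ∧ f a < f j ∧ lvl (insert x S) f a = m ∧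
      (a = x ∨ (a ∈ S ∧ lvl S f a = m - 1)) := by
  obtain ⟨a, haS', haj, hfa, hla⟩ :=
    exists_pred (S := insert x S) (f := f) (Finset.mem_insert_of_mem hj) (by omega)
  rw [hl'] at hla
  refine ⟨a, haS', haj, hfa, by omega, ?_⟩
  rcases Finset.mem_insert.mp haS' with rfl | haS
  · exact Or.inl rfl
  · have h1 : lvl S f a < lvl S f j := lvl_lt haS hj haj hfa
    have h2 : lvl (insert x S) f a ≤ lvl S f a + 1 := lvl_insert_le hx haS
    exact Or.inr ⟨haS, by omega⟩

theorem main : ∀ (k : ℕ) (S : Finset ℕ) (f : ℕ → ℝ) (x : ℕ), x ∉ S → ∀ i₁ i₂ i : ℕ,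
    i₁ ∈ promoted S f x (k + 1) → i₂ ∈ promoted S f x (k + 1) → i ∈ levelSet S f (k + 1) →
    i₁ < i → i < i₂ → i ∈ promoted S f x (k + 1) := by
  intro k
  induction k using Nat.strong_induction_on with
  | _ k IH =>
  intro S f x hx i₁ i₂ i h₁ h₂ hi h₁i hi₂
  obtain ⟨hiS, hil⟩ := hi
  obtain ⟨h₁m, h₁l, h₁or⟩ := h₁
  obtain ⟨h₂m, h₂l, h₂or⟩ := h₂
  have hile : lvl (insert x S) f i ≤ (k + 1) + 1 := by
    have := lvl_insert_le (f := f) hx hiS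
    omega
  have hige : k + 1 ≤ lvl (insert x S) f i := by
    have := lvl_mono (f := f) (Finset.subset_insert x S) hiS
    omega
  -- x < i
  have hxi : x < i := by
    rcases Finset.mem_insert.mp h₁m with rfl | h₁S
    · exact h₁i
    · have h₁lS : lvl S f i₁ = k + 1 := by
        rcases h₁or with rfl | h
        · exact absurd h₁S hx
        · exact h
      have := (promoted_lt (f := f) hx h₁S (by omega)).1
      omega
  have h₂x : i₂ ≠ x := by omega
  have h₂S : i₂ ∈ S := by
    rcases Finset.mem_insert.mp h₂m with rfl | h
    · omega
    · exact h
  have h₂lS : lvl S f i₂ = k + 1 := h₂or.resolve_left h₂x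
  have hf2i : f i₂ ≤ f i := by
    by_contra hcon
    push_neg at hcon
    have := lvl_lt hiS h₂S hi₂ hcon
    omega
  obtain ⟨a, haS', hai₂, hfa2, hla', haor⟩ := promoted_witness hx h₂S h₂lS h₂l (by omega)
  have hfai : f a < f i := lt_of_lt_of_le hfa2 hf2i
  have goal_of : ∀ w, w ∈ insert x S → w < i → f w < f i →
      k + 1 ≤ lvl (insert x S) f w → i ∈ promoted S f x (k + 1) := by
    intro w hw hwi hfw hlw
    have := lvl_lt (S := insert x S) hw (Finset.mem_insert_of_mem hiS) hwi hfw
    exact ⟨Finset.mem_insert_of_mem hiS, by omega, Or.inr hil⟩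
  rcases lt_trichotomy a i with h | h | h
  · exact goal_of a haS' h hfai (by omega)
  · exact absurd (h ▸ hfai) (lt_irrefl _)
  · -- i < a
    have hax : a ≠ x := by omega
    obtain ⟨haS, hlaS⟩ := haor.resolve_left hax
    have hk1 : 1 ≤ k := by
      have := one_le_lvl (f := f) haS
      omega
    have hxa := promoted_lt (f := f) hx haS (by omega)
    have hlx_lt : lvl (insert x S) f x < lvl (insert x S) f a :=
      lvl_lt (Finset.mem_insert_self x S) (Finset.mem_insert_of_mem haS) hxa.1 hxa.2
    have h₁x : i₁ ≠ x := by
      rintro rfl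
      omega
    have h₁S : i₁ ∈ S := (Finset.mem_insert.mp h₁m).resolve_left h₁x
    have h₁lS : lvl S f i₁ = k + 1 := h₁or.resolve_left h₁x
    obtain ⟨b, hbS', hbi₁, hfb1, hlb', hbor⟩ := promoted_witness hx h₁S h₁lS h₁l (by omega)
    by_cases hfbi : f b < f i
    · exact goal_of b hbS' (by omega) hfbi (by omega)
    · push_neg at hfbi
      have hbx : b ≠ x := by
        rintro rfl
        omega
      obtain ⟨hbS, hlbS⟩ := hbor.resolve_left hbx
      obtain ⟨h0, h0S, h0i, hf0, hl0⟩ := exists_pred (f := f) hiS (by omega)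
      rw [hil] at hl0
      by_cases hl0' : k + 1 ≤ lvl (insert x S) f h0
      · exact goal_of h0 (Finset.mem_insert_of_mem h0S) h0i hf0 hl0'
      · push_neg at hl0'
        have hl0ge : k ≤ lvl (insert x S) f h0 := by
          have := lvl_mono (f := f) (Finset.subset_insert x S) h0S
          omega
        rcases lt_trichotomy h0 b with hb | hb | hb
        · have hnb : ¬ f h0 < f b := fun hc => by
            have := lvl_lt h0S hbS hb hc
            omega
          push_neg at hnb
          linarith
        · rw [hb] at hl0'
          omega
        · obtain ⟨m, rfl⟩ : ∃ m, k = m + 1 := ⟨k - 1, by omega⟩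
          have hres := IH m (by omega) S f x hx b a h0
            ⟨hbS', by omega, Or.inr (by omega)⟩
            ⟨haS', by omega, Or.inr (by omega)⟩
            ⟨h0S, by omega⟩ hb (by omega)
          obtain ⟨-, hres2, -⟩ := hres
          omega

end StmtAux

/-- `T_{k+1}` is a contiguous subsection of `L_{k+1}`: for every `k`, if
`i₁, i₂ ∈ T_{k+1}` and `i ∈ L_{k+1}` with `i₁ < i < i₂`, then `i ∈ T_{k+1}`. -/
theorem stmt_8 (S : Finset ℕ) (f : ℕ → ℝ) (x : ℕ) (hx : x ∉ S) (k : ℕ)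
    (i₁ i₂ i : ℕ) (h₁ : i₁ ∈ promoted S f x (k + 1)) (h₂ : i₂ ∈ promoted S f x (k + 1))
    (hi : i ∈ levelSet S f (k + 1)) (h₁i : i₁ < i) (hi₂ : i < i₂) :
    i ∈ promoted S f x (k + 1) := by
  exact StmtAux.main k S f x hx i₁ i₂ i h₁ h₂ hi h₁i hi₂
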